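/- Weighted L⁴ bound for periodic extensions (proved in Section 3): Let ρ>1. There is a constant C_ρ = 2^{1+ρ/2} Σ_{k∈ℕ₀} |2k−1|^{−ρ} depending only on ρ such that the following holds. For every integer n ≥ 1 and every continuous function Z: ℝ → ℝ, let Z^{(n)} be the 2n-periodic function that agrees with Z on [−n,n]. Then ∫_ℝ w_ρ(x) |Z^{(n)}(x)|⁴ dx ≤ C_ρ ∫_ℝ w_ρ(x) |Z(x)|⁴ dx, where w_ρ(x) = (1+x²)^{−ρ/2}. -/

import Mathlib

open MeasureTheory Set

/-- The weight `w_ρ(x) = (1+x²)^{-ρ/2}`. -/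
noncomputable def wgt (ρ x : ℝ) : ℝ := (1 + x ^ 2) ^ (-(ρ / 2))

/-- The `2n`-periodic extension of `Z`, agreeing with `Z` on `[-n, n)`. -/
noncomputable def perExt (n : ℕ) (Z : ℝ → ℝ) (x : ℝ) : ℝ :=
  Z (x - 2 * (n : ℝ) * (⌊(x + (n : ℝ)) / (2 * (n : ℝ))⌋ : ℤ))

lemma pe_summable {ρ : ℝ} (hρ : 1 < ρ) :
    Summable (fun k : ℕ => |2 * (k : ℝ) - 1| ^ (-ρ)) := by
  have h : Summable (fun k : ℕ => ((k : ℝ)) ^ (-ρ)) :=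
    Real.summable_nat_rpow.mpr (by linarith)
  rw [← summable_nat_add_iff 1] at h ⊢
  refine Summable.of_nonneg_of_le (fun k => Real.rpow_nonneg (abs_nonneg _) _) (fun k => ?_) h
  have hk : (0:ℝ) < (k:ℝ) + 1 := by positivity
  have h1 : (0:ℝ) < 2 * ((k:ℝ)+1) - 1 := by linarith
  have h2 : ((k:ℝ)+1) ≤ 2 * ((k:ℝ)+1) - 1 := by linarith
  push_cast
  rw [abs_of_pos h1]
  exact Real.rpow_le_rpow_of_nonpos hk h2 (by linarith)

lemma pe_floor_eq (n : ℕ) (hn : 1 ≤ n) (k : ℤ) (x : ℝ)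
    (hx : x ∈ Ico ((2*(k:ℝ)-1)*n) ((2*(k:ℝ)+1)*n)) :
    ⌊(x + (n:ℝ)) / (2*(n:ℝ))⌋ = k := by
  have hn0 : (0:ℝ) < n := by exact_mod_cast hn
  rw [Int.floor_eq_iff]
  constructor
  · rw [le_div_iff₀ (by positivity)]
    have := hx.1; nlinarith
  · rw [div_lt_iff₀ (by positivity)]
    have := hx.2; nlinarith

lemma pe_cover (n : ℕ) (hn : 1 ≤ n) :
    (⋃ k : ℤ, Ico ((2*(k:ℝ)-1)*(n:ℝ)) ((2*(k:ℝ)+1)*(n:ℝ))) = univ := by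
  have hn0 : (0:ℝ) < n := by exact_mod_cast hn
  ext x
  simp only [mem_iUnion, mem_univ, iff_true]
  refine ⟨⌊(x + (n:ℝ))/(2*(n:ℝ))⌋, mem_Ico.mpr ⟨?_, ?_⟩⟩
  · have h := Int.floor_le ((x + (n:ℝ))/(2*(n:ℝ)))
    rw [le_div_iff₀ (by positivity)] at h
    nlinarith
  · have h := Int.lt_floor_add_one ((x + (n:ℝ))/(2*(n:ℝ)))
    rw [div_lt_iff₀ (by positivity)] at h
    push_cast
    nlinarith

lemma pe_wgt_bound {ρ : ℝ} (hρ : 1 < ρ) (n : ℕ) (hn : 1 ≤ n) (k : ℤ) (y : ℝ)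
    (hy : |y| ≤ n) :
    wgt ρ (y + 2*(n:ℝ)*k) ≤ (2:ℝ)^(ρ/2) * |2*|(k:ℝ)| - 1| ^ (-ρ) * wgt ρ y := by
  have hn0 : (0:ℝ) < n := by exact_mod_cast hn
  have hn1 : (1:ℝ) ≤ n := by exact_mod_cast hn
  have hρ2 : (0:ℝ) ≤ ρ/2 := by linarith
  rcases eq_or_ne k 0 with rfl | hk
  · simp only [Int.cast_zero, mul_zero, add_zero, abs_zero, zero_sub, abs_neg, abs_one]
    rw [Real.one_rpow]
    have h1 : (1:ℝ) ≤ (2:ℝ)^(ρ/2) := Real.one_le_rpow (by norm_num) hρ2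
    have hw : 0 ≤ wgt ρ y := by unfold wgt; positivity
    nlinarith
  · set K : ℝ := |(k:ℝ)| with hK
    have hK1 : (1:ℝ) ≤ K := by
      rw [hK, ← Int.cast_abs]
      exact_mod_cast Int.one_le_abs hk
    have habs : |2*K - 1| = 2*K - 1 := abs_of_nonneg (by linarith)
    rw [habs]
    set x : ℝ := y + 2*(n:ℝ)*k with hx
    have hxabs : n*(2*K-1) ≤ |x| := by
      have h2 : |2*(n:ℝ)*k| = 2*n*K := by
        rw [abs_mul, abs_of_nonneg (by positivity : (0:ℝ) ≤ 2*(n:ℝ))]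
      have := abs_sub_abs_le_abs_sub (2*(n:ℝ)*k) (-y)
      have h3 : |2*(n:ℝ)*k - -y| = |x| := by rw [hx]; ring_nf
      rw [h3, h2, abs_neg] at this
      nlinarith
    have hA : (n*(2*K-1))^2 ≤ 1 + x^2 := by
      have := pow_le_pow_left₀ (mul_nonneg hn0.le (by linarith) : (0:ℝ) ≤ n*(2*K-1)) hxabs 2
      rw [sq_abs] at this
      nlinarith
    have hB : 1 + y^2 ≤ 2*n^2 := by
      have := pow_le_pow_left₀ (abs_nonneg y) hy 2
      rw [sq_abs] at this
      nlinarith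
    have sq_rpow : ∀ a : ℝ, 0 ≤ a → (a^2)^(ρ/2) = a^ρ := by
      intro a ha
      rw [← Real.rpow_natCast a 2, ← Real.rpow_mul ha]
      congr 1; ring
    have ha_pos : (0:ℝ) < (1 + x^2)^(ρ/2) := Real.rpow_pos_of_pos (by positivity) _
    have hb_pos : (0:ℝ) < (1 + y^2)^(ρ/2) := Real.rpow_pos_of_pos (by positivity) _
    have hc_pos : (0:ℝ) < (2*K-1)^ρ := Real.rpow_pos_of_pos (by linarith) _
    have h1 : (1 + y^2)^(ρ/2) ≤ (2:ℝ)^(ρ/2) * (n:ℝ)^ρ := by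
      calc (1 + y^2)^(ρ/2) ≤ (2*(n:ℝ)^2)^(ρ/2) :=
            Real.rpow_le_rpow (by positivity) hB hρ2
        _ = (2:ℝ)^(ρ/2) * ((n:ℝ)^2)^(ρ/2) :=
            Real.mul_rpow (by norm_num) (by positivity)
        _ = (2:ℝ)^(ρ/2) * (n:ℝ)^ρ := by rw [sq_rpow _ (le_of_lt hn0)]
    have h2 : (n:ℝ)^ρ * (2*K-1)^ρ ≤ (1 + x^2)^(ρ/2) := by
      calc (n:ℝ)^ρ * (2*K-1)^ρ = (n*(2*K-1))^ρ :=
            (Real.mul_rpow (le_of_lt hn0) (by linarith)).symm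
        _ = ((n*(2*K-1))^2)^(ρ/2) := (sq_rpow _ (mul_nonneg hn0.le (by linarith))).symm
        _ ≤ (1 + x^2)^(ρ/2) := Real.rpow_le_rpow (by positivity) hA hρ2
    have key : (2*K-1)^ρ * (1 + y^2)^(ρ/2) ≤ (2:ℝ)^(ρ/2) * (1 + x^2)^(ρ/2) := by
      calc (2*K-1)^ρ * (1 + y^2)^(ρ/2) ≤ (2*K-1)^ρ * ((2:ℝ)^(ρ/2) * (n:ℝ)^ρ) := by
            exact mul_le_mul_of_nonneg_left h1 (le_of_lt hc_pos)
        _ = (2:ℝ)^(ρ/2) * ((n:ℝ)^ρ * (2*K-1)^ρ) := by ring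
        _ ≤ (2:ℝ)^(ρ/2) * (1 + x^2)^(ρ/2) := by
            have h2pos : (0:ℝ) < (2:ℝ)^(ρ/2) := Real.rpow_pos_of_pos (by norm_num) _
            exact mul_le_mul_of_nonneg_left h2 (le_of_lt h2pos)
    unfold wgt
    rw [Real.rpow_neg (by positivity : (0:ℝ) ≤ 1 + x^2),
        Real.rpow_neg (by positivity : (0:ℝ) ≤ 1 + y^2),
        Real.rpow_neg (by linarith : (0:ℝ) ≤ 2*K-1)]
    have hR : (2:ℝ)^(ρ/2) * ((2*K-1)^ρ)⁻¹ * ((1 + y^2)^(ρ/2))⁻¹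
        = (2:ℝ)^(ρ/2) / ((2*K-1)^ρ * (1 + y^2)^(ρ/2)) := by
      field_simp
    rw [hR, inv_eq_one_div, div_le_div_iff₀ ha_pos (by positivity), one_mul]
    exact key

lemma pe_sum_bound {ρ : ℝ} (hρ : 1 < ρ) :
    (∑' k : ℤ, ENNReal.ofReal ((2:ℝ)^(ρ/2) * |2*|(k:ℝ)| - 1| ^ (-ρ))) ≤
      ENNReal.ofReal ((2 : ℝ) ^ (1 + ρ / 2) * ∑' k : ℕ, |2 * (k : ℝ) - 1| ^ (-ρ)) := by
  have hS := pe_summable hρ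
  set S : ℝ := ∑' k : ℕ, |2 * (k : ℝ) - 1| ^ (-ρ) with hSdef
  have h2pos : (0:ℝ) ≤ (2:ℝ)^(ρ/2) := Real.rpow_nonneg (by norm_num) _
  have hsplit : (∑' k : ℤ, ENNReal.ofReal ((2:ℝ)^(ρ/2) * |2*|(k:ℝ)| - 1| ^ (-ρ)))
      = (∑' m : ℕ, ENNReal.ofReal ((2:ℝ)^(ρ/2) * |2*|((m:ℤ):ℝ)| - 1| ^ (-ρ)))
        + ∑' m : ℕ, ENNReal.ofReal ((2:ℝ)^(ρ/2) * |2*|((-(m+1):ℤ):ℝ)| - 1| ^ (-ρ)) :=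
    tsum_of_nat_of_neg_add_one ENNReal.summable ENNReal.summable
  have hnat : ∀ m : ℕ, ENNReal.ofReal ((2:ℝ)^(ρ/2) * |2*|((m:ℤ):ℝ)| - 1| ^ (-ρ))
      = ENNReal.ofReal ((2:ℝ)^(ρ/2) * |2*(m:ℝ) - 1| ^ (-ρ)) := by
    intro m
    norm_num [abs_of_nonneg (Nat.cast_nonneg m : (0:ℝ) ≤ m)]
  have hneg : ∀ m : ℕ, ENNReal.ofReal ((2:ℝ)^(ρ/2) * |2*|((-(m+1):ℤ):ℝ)| - 1| ^ (-ρ))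
      ≤ ENNReal.ofReal ((2:ℝ)^(ρ/2) * |2*(m:ℝ) - 1| ^ (-ρ)) := by
    intro m
    apply ENNReal.ofReal_le_ofReal
    apply mul_le_mul_of_nonneg_left _ h2pos
    have h1 : |((-(m+1):ℤ):ℝ)| = (m:ℝ) + 1 := by
      push_cast
      rw [abs_neg, abs_of_nonneg (by positivity)]
    rw [h1]
    rcases Nat.eq_zero_or_pos m with rfl | hm
    · norm_num
    · have hm1 : (1:ℝ) ≤ m := by exact_mod_cast hm
      have e1 : |2*((m:ℝ)+1) - 1| = 2*(m:ℝ)+1 := by rw [abs_of_nonneg (by linarith)]; ring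
      have e2 : |2*(m:ℝ) - 1| = 2*(m:ℝ)-1 := abs_of_nonneg (by linarith)
      rw [e1, e2]
      exact Real.rpow_le_rpow_of_nonpos (by linarith) (by linarith) (by linarith)
  have hofS : (∑' m : ℕ, ENNReal.ofReal ((2:ℝ)^(ρ/2) * |2*(m:ℝ) - 1| ^ (-ρ)))
      = ENNReal.ofReal ((2:ℝ)^(ρ/2) * S) := by
    rw [hSdef, ← hS.tsum_mul_left ((2:ℝ)^(ρ/2))]
    exact (ENNReal.ofReal_tsum_of_nonneg (fun m => by positivity) (hS.mul_left _)).symm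
  calc (∑' k : ℤ, ENNReal.ofReal ((2:ℝ)^(ρ/2) * |2*|(k:ℝ)| - 1| ^ (-ρ)))
      = _ + _ := hsplit
    _ ≤ (∑' m : ℕ, ENNReal.ofReal ((2:ℝ)^(ρ/2) * |2*(m:ℝ) - 1| ^ (-ρ)))
        + ∑' m : ℕ, ENNReal.ofReal ((2:ℝ)^(ρ/2) * |2*(m:ℝ) - 1| ^ (-ρ)) := by
        exact add_le_add (le_of_eq (tsum_congr hnat)) (ENNReal.tsum_le_tsum hneg)
    _ = ENNReal.ofReal ((2:ℝ)^(ρ/2) * S) + ENNReal.ofReal ((2:ℝ)^(ρ/2) * S) := by rw [hofS]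
    _ = ENNReal.ofReal ((2:ℝ)^(ρ/2) * S + (2:ℝ)^(ρ/2) * S) := by
        have hS0 : 0 ≤ S := tsum_nonneg (fun m => by positivity)
        exact (ENNReal.ofReal_add (by positivity) (by positivity)).symm
    _ ≤ ENNReal.ofReal ((2 : ℝ) ^ (1 + ρ / 2) * S) := by
        apply ENNReal.ofReal_le_ofReal
        have : (2:ℝ)^(1+ρ/2) = 2 * (2:ℝ)^(ρ/2) := by
          rw [Real.rpow_add (by norm_num), Real.rpow_one]
        rw [this]; nlinarith [sq_nonneg S]

/-- Weighted `L⁴` bound for periodic extensions (Section 3): for `ρ > 1`,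
with `C_ρ = 2^{1+ρ/2} Σ_{k∈ℕ₀} |2k-1|^{-ρ}`, every integer `n ≥ 1`
and continuous `Z : ℝ → ℝ` satisfy
`∫ w_ρ |Z^{(n)}|⁴ ≤ C_ρ ∫ w_ρ |Z|⁴`. -/
theorem periodic_extension_weighted_L4
    (ρ : ℝ) (hρ : 1 < ρ) (n : ℕ) (hn : 1 ≤ n) (Z : ℝ → ℝ) (hZ : Continuous Z) :
    (∫⁻ x : ℝ, ENNReal.ofReal (wgt ρ x * |perExt n Z x| ^ 4)) ≤
      ENNReal.ofReal ((2 : ℝ) ^ (1 + ρ / 2) * ∑' k : ℕ, |2 * (k : ℝ) - 1| ^ (-ρ)) *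
        ∫⁻ x : ℝ, ENNReal.ofReal (wgt ρ x * |Z x| ^ 4) := by
  have hn0 : (0:ℝ) < n := by exact_mod_cast hn
  have hwgt : Continuous (wgt ρ) := by
    unfold wgt
    exact (continuous_const.add (continuous_pow 2)).rpow_const
      (fun x => Or.inl (by positivity : (1:ℝ) + x^2 ≠ 0))
  set g : ℝ → ENNReal := fun y => ENNReal.ofReal (wgt ρ y * |Z y| ^ 4) with hg
  have hgm : Measurable g := ((hwgt.mul ((hZ.abs).pow 4)).measurable).ennreal_ofReal
  set I : ℤ → Set ℝ := fun k => Ico ((2*(k:ℝ)-1)*(n:ℝ)) ((2*(k:ℝ)+1)*(n:ℝ)) with hI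
  have hdisj : Pairwise (Function.onFun Disjoint I) := by
    intro i j hij
    simp only [Function.onFun, hI]
    rw [Set.Ico_disjoint_Ico]
    rcases hij.lt_or_gt with h | h
    · have hij' : (i:ℝ) + 1 ≤ j := by exact_mod_cast h
      have hle : ((2*(i:ℝ)+1)*(n:ℝ)) ≤ ((2*(j:ℝ)-1)*(n:ℝ)) := by nlinarith
      exact le_trans (min_le_left _ _) (le_trans hle (le_max_right _ _))
    · have hij' : (j:ℝ) + 1 ≤ i := by exact_mod_cast h
      have hle : ((2*(j:ℝ)+1)*(n:ℝ)) ≤ ((2*(i:ℝ)-1)*(n:ℝ)) := by nlinarith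
      exact le_trans (min_le_right _ _) (le_trans hle (le_max_left _ _))
  have key : ∀ k : ℤ, (∫⁻ x in I k, ENNReal.ofReal (wgt ρ x * |perExt n Z x| ^ 4))
      ≤ ENNReal.ofReal ((2:ℝ)^(ρ/2) * |2*|(k:ℝ)| - 1| ^ (-ρ)) * ∫⁻ x, g x := by
    intro k
    set c : ℝ := (2:ℝ)^(ρ/2) * |2*|(k:ℝ)| - 1| ^ (-ρ) with hc
    have hc0 : 0 ≤ c := by positivity
    have hbm : Measurable (fun x : ℝ => ENNReal.ofReal c * g (x - 2*(n:ℝ)*k)) :=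
      measurable_const.mul (hgm.comp (measurable_id.sub measurable_const))
    have step1 : (∫⁻ x in I k, ENNReal.ofReal (wgt ρ x * |perExt n Z x| ^ 4))
        ≤ ∫⁻ x in I k, ENNReal.ofReal c * g (x - 2*(n:ℝ)*k) := by
      apply setLIntegral_mono hbm
      intro x hx
      have hper : perExt n Z x = Z (x - 2*(n:ℝ)*k) := by
        unfold perExt
        rw [pe_floor_eq n hn k x hx]
      rw [hper, hg]
      simp only []
      rw [← ENNReal.ofReal_mul hc0]
      apply ENNReal.ofReal_le_ofReal
      have hx1 := hx.1
      have hx2 := hx.2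
      have hyb : |x - 2*(n:ℝ)*k| ≤ n := by
        rw [abs_le]
        constructor <;> nlinarith
      have hw := pe_wgt_bound hρ n hn k (x - 2*(n:ℝ)*k) hyb
      rw [show (x - 2*(n:ℝ)*k) + 2*(n:ℝ)*k = x by ring] at hw
      calc wgt ρ x * |Z (x - 2*(n:ℝ)*k)|^4
          ≤ (c * wgt ρ (x - 2*(n:ℝ)*k)) * |Z (x - 2*(n:ℝ)*k)|^4 :=
            mul_le_mul_of_nonneg_right hw (by positivity)
        _ = c * (wgt ρ (x - 2*(n:ℝ)*k) * |Z (x - 2*(n:ℝ)*k)|^4) := by ring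
    have hpre : (fun x : ℝ => x - 2*(n:ℝ)*k) ⁻¹' (Ico (-(n:ℝ)) (n:ℝ)) = I k := by
      rw [preimage_sub_const_Ico]
      simp only [hI]
      congr 1 <;> ring
    have mp : MeasurePreserving (fun x : ℝ => x - 2*(n:ℝ)*k) volume volume :=
      measurePreserving_sub_right volume _
    have step3 : (∫⁻ x in I k, g (x - 2*(n:ℝ)*k)) = ∫⁻ y in Ico (-(n:ℝ)) (n:ℝ), g y := by
      rw [← hpre]
      exact mp.setLIntegral_comp_preimage measurableSet_Ico hgm
    calc (∫⁻ x in I k, ENNReal.ofReal (wgt ρ x * |perExt n Z x| ^ 4))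
        ≤ ∫⁻ x in I k, ENNReal.ofReal c * g (x - 2*(n:ℝ)*k) := step1
      _ = ENNReal.ofReal c * ∫⁻ x in I k, g (x - 2*(n:ℝ)*k) :=
          lintegral_const_mul _ (hgm.comp (measurable_id.sub measurable_const))
      _ = ENNReal.ofReal c * ∫⁻ y in Ico (-(n:ℝ)) (n:ℝ), g y := by rw [step3]
      _ ≤ ENNReal.ofReal c * ∫⁻ y, g y :=
          mul_le_mul_right (setLIntegral_le_lintegral _ _) _
  calc (∫⁻ x : ℝ, ENNReal.ofReal (wgt ρ x * |perExt n Z x| ^ 4))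
      = ∫⁻ x in univ, ENNReal.ofReal (wgt ρ x * |perExt n Z x| ^ 4) :=
        (setLIntegral_univ _).symm
    _ = ∫⁻ x in ⋃ k : ℤ, I k, ENNReal.ofReal (wgt ρ x * |perExt n Z x| ^ 4) := by
        rw [hI]; rw [pe_cover n hn]
    _ = ∑' k : ℤ, ∫⁻ x in I k, ENNReal.ofReal (wgt ρ x * |perExt n Z x| ^ 4) :=
        lintegral_iUnion (fun k => measurableSet_Ico) hdisj _
    _ ≤ ∑' k : ℤ, ENNReal.ofReal ((2:ℝ)^(ρ/2) * |2*|(k:ℝ)| - 1| ^ (-ρ)) * ∫⁻ x, g x :=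
        ENNReal.tsum_le_tsum key
    _ = (∑' k : ℤ, ENNReal.ofReal ((2:ℝ)^(ρ/2) * |2*|(k:ℝ)| - 1| ^ (-ρ))) * ∫⁻ x, g x :=
        ENNReal.tsum_mul_right
    _ ≤ ENNReal.ofReal ((2 : ℝ) ^ (1 + ρ / 2) * ∑' k : ℕ, |2 * (k : ℝ) - 1| ^ (-ρ)) *
          ∫⁻ x, g x :=
        mul_le_mul_left (pe_sum_bound hρ) _
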